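/- Let P, Q : [0,1] → R be polygonal curves with d_F(Q, P) ≤ δ realized by a monotone traversal φ, and assume Q(t) lies in the closed interval with endpoints Q(0) and Q(1) for all t ∈ [0,1]. If no inner vertex of Q δ-visits an inner vertex of P under φ, then the single line segment Q' from Q(0) to Q(1) is a range-preserving δ-simplification of Q and satisfies d_F(Q', P) ≤ δ. -/

import Mathlib

/-- Continuous Fréchet distance between curves on the unit interval. -/
noncomputable def frechetDist {E : Type*} [PseudoMetricSpace E] (P Q : unitInterval → E) : ℝ :=
  sInf {r : ℝ | ∃ f g : unitInterval → unitInterval,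
    Continuous f ∧ Monotone f ∧ Function.Surjective f ∧
    Continuous g ∧ Monotone g ∧ Function.Surjective g ∧
    ∀ t, dist (P (f t)) (Q (g t)) ≤ r}

/-- The directed line segment from `a` to `b`, parametrized linearly. -/
noncomputable def segCurve {E : Type*} [AddCommGroup E] [Module ℝ E] (a b : E) :
    unitInterval → E :=
  fun t => (1 - (t : ℝ)) • a + (t : ℝ) • b

/-- The polygonal curve with `n+1` vertices `p 0, …, p n`, parametrized uniformly. -/
noncomputable def polyCurve {E : Type*} [AddCommGroup E] [Module ℝ E]
    (n : ℕ) (p : Fin (n + 1) → E) (t : unitInterval) : E :=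
  let x : ℝ := (t : ℝ) * n
  let i : ℕ := min (Nat.floor x) (n - 1)
  (1 - (x - (i : ℝ))) • p ⟨min i n, Nat.lt_succ_of_le (min_le_right i n)⟩ +
    (x - (i : ℝ)) • p ⟨min (i + 1) n, Nat.lt_succ_of_le (min_le_right (i + 1) n)⟩

/-- The subcurve `Q[a,b]`, linearly reparametrized over the unit interval. -/
noncomputable def subcurve {E : Type*} (Q : unitInterval → E) (a b : unitInterval) :
    unitInterval → E :=
  fun s => Q ⟨(1 - (s : ℝ)) * (a : ℝ) + (s : ℝ) * (b : ℝ), Set.mem_Icc.mpr ⟨by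
      have hs0 := unitInterval.nonneg s; have hs1 := unitInterval.le_one s
      have ha0 := unitInterval.nonneg a; have hb0 := unitInterval.nonneg b
      have h1 : (0:ℝ) ≤ (1 - (s:ℝ)) * (a:ℝ) := mul_nonneg (by linarith) ha0
      have h2 : (0:ℝ) ≤ (s:ℝ) * (b:ℝ) := mul_nonneg hs0 hb0
      linarith, by
      have hs0 := unitInterval.nonneg s; have hs1 := unitInterval.le_one s
      have ha1 := unitInterval.le_one a; have hb1 := unitInterval.le_one b
      have h1 : (1 - (s:ℝ)) * (a:ℝ) ≤ (1 - (s:ℝ)) * 1 :=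
        mul_le_mul_of_nonneg_left ha1 (by linarith)
      have h2 : (s:ℝ) * (b:ℝ) ≤ (s:ℝ) * 1 := mul_le_mul_of_nonneg_left hb1 hs0
      linarith⟩⟩

/-- The parameter (in the uniform parametrization) of the `i`-th vertex of a
polygonal curve with `n` edges. -/
noncomputable def vparam (n : ℕ) (i : Fin (n + 1)) : unitInterval :=
  ⟨((i : ℕ) : ℝ) / (n : ℝ), Set.mem_Icc.mpr ⟨by positivity, by
    have h1 : ((i : ℕ) : ℝ) ≤ (n : ℝ) := by exact_mod_cast Nat.lt_succ_iff.mp i.isLt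
    rcases Nat.eq_zero_or_pos n with h | h
    · subst h; simp
    · rw [div_le_one (by exact_mod_cast h)]; exact h1⟩⟩

/-- `P` is `c`-monotone increasing. -/
def ApproxInc (c : ℝ) (P : unitInterval → ℝ) : Prop :=
  ∀ s t : unitInterval, s ≤ t → P s - c ≤ P t

/-- `P` is `c`-monotone decreasing. -/
def ApproxDec (c : ℝ) (P : unitInterval → ℝ) : Prop :=
  ∀ s t : unitInterval, s ≤ t → P t ≤ P s + c

/-- `P` is `c`-monotone. -/
def ApproxMono (c : ℝ) (P : unitInterval → ℝ) : Prop :=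
  ApproxInc c P ∨ ApproxDec c P

/-- Concatenation of two curves (first on `[0,1/2]`, second on `[1/2,1]`). -/
noncomputable def concatC {E : Type*} (P Q : unitInterval → E) : unitInterval → E :=
  fun t =>
    if h : (t : ℝ) ≤ 1 / 2 then
      P ⟨2 * (t : ℝ), Set.mem_Icc.mpr ⟨by have := unitInterval.nonneg t; linarith,
        by linarith⟩⟩
    else
      Q ⟨2 * (t : ℝ) - 1, Set.mem_Icc.mpr ⟨by push_neg at h; linarith,
        by have := unitInterval.le_one t; linarith⟩⟩

/-- The data of a `δ`-straightening of the curve `Q`: parameters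
`0 = t 0 < … < t (Fin.last ℓ) = 1` such that each shortcut segment is within
Fréchet distance `δ` of the corresponding subcurve (locality), and each
corresponding subcurve stays in the closed interval spanned by the shortcut's
endpoints (edge-range-preserving). -/
def StraighteningData (δ : ℝ) (Q : unitInterval → ℝ) (ℓ : ℕ)
    (t : Fin (ℓ + 1) → unitInterval) : Prop :=
  StrictMono t ∧ t 0 = 0 ∧ t (Fin.last ℓ) = 1 ∧
    ∀ i : Fin ℓ,
      frechetDist (segCurve (Q (t i.castSucc)) (Q (t i.succ)))
          (subcurve Q (t i.castSucc) (t i.succ)) ≤ δ ∧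
      ∀ s : unitInterval, t i.castSucc ≤ s → s ≤ t i.succ →
        Q s ∈ Set.uIcc (Q (t i.castSucc)) (Q (t i.succ))

/-- `Q'` is a `δ`-straightening of `Q`. -/
def IsStraightening (δ : ℝ) (Q Q' : unitInterval → ℝ) : Prop :=
  ∃ (ℓ : ℕ) (t : Fin (ℓ + 1) → unitInterval),
    StraighteningData δ Q ℓ t ∧ Q' = polyCurve ℓ (fun i => Q (t i))

/-- The data of a `δ`-signature of the curve `Q`: parameters
`0 = t 0 < … < t (Fin.last ℓ) = 1` with the locality property, non-degenerate
vertex-range-preserving interior vertices, and the `δ`-edge-length property. -/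
def SignatureData (δ : ℝ) (Q : unitInterval → ℝ) (ℓ : ℕ)
    (t : Fin (ℓ + 1) → unitInterval) : Prop :=
  StrictMono t ∧ t 0 = 0 ∧ t (Fin.last ℓ) = 1 ∧
    (∀ i : Fin ℓ,
      frechetDist (segCurve (Q (t i.castSucc)) (Q (t i.succ)))
          (subcurve Q (t i.castSucc) (t i.succ)) ≤ δ) ∧
    (∀ i : ℕ, ∀ _h1 : 0 < i, ∀ _h2 : i < ℓ,
      (Q (t ⟨i - 1, by omega⟩) < Q (t ⟨i, by omega⟩) ∧
        Q (t ⟨i + 1, by omega⟩) < Q (t ⟨i, by omega⟩) ∧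
        ∀ s : unitInterval, t ⟨i - 1, by omega⟩ ≤ s → s ≤ t ⟨i + 1, by omega⟩ →
          Q s ≤ Q (t ⟨i, by omega⟩)) ∨
      (Q (t ⟨i, by omega⟩) < Q (t ⟨i - 1, by omega⟩) ∧
        Q (t ⟨i, by omega⟩) < Q (t ⟨i + 1, by omega⟩) ∧
        ∀ s : unitInterval, t ⟨i - 1, by omega⟩ ≤ s → s ≤ t ⟨i + 1, by omega⟩ →
          Q (t ⟨i, by omega⟩) ≤ Q s)) ∧
    (∀ _h : 1 ≤ ℓ,
      δ < |Q (t ⟨1, by omega⟩) - Q (t 0)| ∧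
      δ < |Q (t (Fin.last ℓ)) - Q (t ⟨ℓ - 1, by omega⟩)|) ∧
    (∀ j : ℕ, ∀ _hj1 : 1 ≤ j, ∀ _hj2 : j + 2 ≤ ℓ,
      2 * δ < |Q (t ⟨j + 1, by omega⟩) - Q (t ⟨j, by omega⟩)|)

/-- `Q'` is a `δ`-signature of `Q`. -/
def IsSignature (δ : ℝ) (Q Q' : unitInterval → ℝ) : Prop :=
  ∃ (ℓ : ℕ) (t : Fin (ℓ + 1) → unitInterval),
    SignatureData δ Q ℓ t ∧ Q' = polyCurve ℓ (fun i => Q (t i))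

/-- Vertex `j` of the polygonal curve on `q` `δ`-visits vertex `a` of the
polygonal curve on `p` under the monotone traversal `(f, g)`: they are within
distance `δ`, and the traversal matches one of them to the other vertex or to the
interior of an edge incident to it. -/
def Visits (δ : ℝ) (m k : ℕ) (p : Fin (m + 1) → ℝ) (q : Fin (k + 1) → ℝ)
    (f g : unitInterval → unitInterval) (j : Fin (k + 1)) (a : Fin (m + 1)) : Prop :=
  |q j - p a| ≤ δ ∧
    ((∃ t : unitInterval, g t = vparam k j ∧ |(f t : ℝ) * (m : ℝ) - ((a : ℕ) : ℝ)| < 1) ∨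
     (∃ t : unitInterval, f t = vparam m a ∧ |(g t : ℝ) * (k : ℝ) - ((j : ℕ) : ℝ)| < 1))

lemma comb_le_max (a b θ : ℝ) (h0 : 0 ≤ θ) (h1 : θ ≤ 1) :
    (1 - θ) * a + θ * b ≤ max a b := by
  rcases le_total a b with h | h
  · rw [max_eq_right h]; nlinarith
  · rw [max_eq_left h]; nlinarith

lemma min_le_comb (a b θ : ℝ) (h0 : 0 ≤ θ) (h1 : θ ≤ 1) :
    min a b ≤ (1 - θ) * a + θ * b := by
  rcases le_total a b with h | h
  · rw [min_eq_left h]; nlinarith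
  · rw [min_eq_right h]; nlinarith

lemma comb_mem_uIcc (a b θ : ℝ) (h0 : 0 ≤ θ) (h1 : θ ≤ 1) :
    (1 - θ) * a + θ * b ∈ Set.uIcc a b := by
  rw [Set.uIcc, Set.mem_Icc]
  exact ⟨min_le_comb a b θ h0 h1, comb_le_max a b θ h0 h1⟩

lemma polyCurve_eval_edge {n : ℕ} (p : Fin (n + 1) → ℝ) (i : ℕ) (hi : i + 1 ≤ n)
    (t : unitInterval) (h1 : (i : ℝ) ≤ (t : ℝ) * n) (h2 : (t : ℝ) * n ≤ (i : ℝ) + 1) :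
    polyCurve n p t =
      (1 - ((t : ℝ) * n - i)) * p ⟨i, by omega⟩ + ((t : ℝ) * n - i) * p ⟨i + 1, by omega⟩ := by
  have hx0 : (0:ℝ) ≤ (t : ℝ) * n := le_trans (by positivity) h1
  rcases lt_or_eq_of_le h2 with hlt | heq
  · have hfl : Nat.floor ((t : ℝ) * n) = i := by
      rw [Nat.floor_eq_iff hx0]; exact ⟨h1, by push_cast; linarith⟩
    have h3 : min i (n-1) = i := min_eq_left (by omega)
    have h4 : min i n = i := min_eq_left (by omega)
    have h5 : min (i+1) n = i+1 := min_eq_left hi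
    simp only [polyCurve, hfl, h3, h4, h5, smul_eq_mul]
  · have hfl : Nat.floor ((t:ℝ) * n) = i + 1 := by
      have hc : ((i:ℝ)+1) = ((i+1 : ℕ):ℝ) := by push_cast; ring
      rw [heq, hc]; exact Nat.floor_natCast (i+1)
    rcases Nat.lt_or_ge (i+1) (n-1+1) with h | h
    · have h3 : min (i+1) (n-1) = i+1 := min_eq_left (by omega)
      have h4 : min (i+1) n = i+1 := min_eq_left (by omega)
      have h5 : min (i+2) n = i+2 := min_eq_left (by omega)
      have e0 : ((t:ℝ)*n - ((i+1:ℕ):ℝ)) = 0 := by push_cast; linarith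
      have e1 : ((t:ℝ)*n - (i:ℝ)) = 1 := by linarith
      simp only [polyCurve, hfl, h3, h4, h5, smul_eq_mul, e0, e1]
      norm_num
    · have e1 : min (i+1) (n-1) = i := (min_eq_right (by omega)).trans (by omega)
      have h4 : min i n = i := min_eq_left (by omega)
      have h5 : min (i+1) n = i+1 := min_eq_left (by omega)
      simp only [polyCurve, hfl, e1, h4, h5, smul_eq_mul]

lemma unit_mul_n_mem {n : ℕ} (t : unitInterval) : (0:ℝ) ≤ (t:ℝ) * n ∧ (t:ℝ) * n ≤ n := by
  constructor
  · exact mul_nonneg t.2.1 (Nat.cast_nonneg n)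
  · nlinarith [t.2.2, (Nat.cast_nonneg n : (0:ℝ) ≤ n)]

lemma polyCurve_rep {n : ℕ} (hn : 0 < n) (p : Fin (n + 1) → ℝ) (t : unitInterval) :
    ∃ (i : ℕ) (_h : i + 1 ≤ n), (i : ℝ) ≤ (t : ℝ) * n ∧ (t : ℝ) * n ≤ (i : ℝ) + 1 ∧
      polyCurve n p t =
        (1 - ((t : ℝ) * n - i)) * p ⟨i, by omega⟩ + ((t : ℝ) * n - i) * p ⟨i + 1, by omega⟩ := by
  obtain ⟨hx0, hxn⟩ := unit_mul_n_mem (n := n) t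
  set x := (t:ℝ) * n with hxdef
  rcases Nat.lt_or_ge (Nat.floor x) n with h | h
  · refine ⟨Nat.floor x, by omega, Nat.floor_le hx0, (Nat.lt_floor_add_one x).le, ?_⟩
    exact polyCurve_eval_edge p _ (by omega) t (Nat.floor_le hx0) (Nat.lt_floor_add_one x).le
  · have hxeq : x = n := by
      have := Nat.floor_le hx0
      have : (n:ℝ) ≤ x := le_trans (by exact_mod_cast h) this
      linarith
    have h1 : ((n-1 : ℕ):ℝ) ≤ x := by
      rw [hxeq]; have : ((n-1:ℕ):ℝ) ≤ (n:ℝ) := by exact_mod_cast Nat.sub_le n 1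
      linarith
    have h2 : x ≤ ((n-1:ℕ):ℝ) + 1 := by
      rw [hxeq]
      have : ((n-1:ℕ):ℝ) + 1 = ((n-1+1 : ℕ):ℝ) := by push_cast; ring
      rw [this]
      exact_mod_cast le_of_eq (by omega)
    exact ⟨n-1, by omega, h1, h2, polyCurve_eval_edge p _ (by omega) t h1 h2⟩

lemma vparam_mul {n : ℕ} (hn : 0 < n) (j : Fin (n+1)) :
    ((vparam n j : unitInterval) : ℝ) * n = (j : ℕ) := by
  have : ((vparam n j : unitInterval) : ℝ) = (j:ℕ) / n := rfl
  rw [this]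
  field_simp

lemma polyCurve_vertex {n : ℕ} (hn : 0 < n) (p : Fin (n+1) → ℝ) (j : Fin (n+1)) :
    polyCurve n p (vparam n j) = p j := by
  have hx := vparam_mul hn (n := n) j
  rcases Nat.lt_or_ge (j : ℕ) n with h | h
  · rw [polyCurve_eval_edge p (j:ℕ) (by omega) _ (le_of_eq hx.symm) (by rw [hx]; linarith)]
    rw [hx]
    simp
  · have hj : (j:ℕ) = n := by omega
    have hc : ((n-1:ℕ):ℝ) = (n:ℝ) - 1 := by
      rw [Nat.cast_sub (by omega : 1 ≤ n)]; norm_num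
    rw [polyCurve_eval_edge p (n-1) (by omega) _ (by rw [hx, hj, hc]; linarith)
      (by rw [hx, hj, hc]; linarith)]
    rw [hx]
    have hv : ((j:ℕ):ℝ) = (n:ℝ) := by exact_mod_cast hj
    have e : ((j:ℕ):ℝ) - ((n-1:ℕ):ℝ) = 1 := by rw [hv, hc]; ring
    rw [e]
    norm_num
    exact congrArg p (Fin.ext (by simp; omega))

lemma unit_zero_eq_vparam {n : ℕ} (hn : 0 < n) : (0 : unitInterval) = vparam n 0 := by
  apply Subtype.ext
  show (0:ℝ) = ((0 : Fin (n+1)):ℕ) / n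
  simp

lemma unit_one_eq_vparam {n : ℕ} (hn : 0 < n) : (1 : unitInterval) = vparam n (Fin.last n) := by
  apply Subtype.ext
  show (1:ℝ) = ((Fin.last n : Fin (n+1)):ℕ) / n
  rw [Fin.val_last]
  rw [div_self]
  exact_mod_cast hn.ne'

lemma polyCurve_zero {n : ℕ} (hn : 0 < n) (p : Fin (n+1) → ℝ) : polyCurve n p 0 = p 0 := by
  rw [unit_zero_eq_vparam hn, polyCurve_vertex hn]

lemma polyCurve_one {n : ℕ} (hn : 0 < n) (p : Fin (n+1) → ℝ) :
    polyCurve n p 1 = p (Fin.last n) := by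
  rw [unit_one_eq_vparam hn, polyCurve_vertex hn]

lemma pos_cases {n : ℕ} (hn : 0 < n) (x : unitInterval) :
    (∃ j : Fin (n+1), x = vparam n j) ∨
      (∃ i : ℕ, i + 1 ≤ n ∧ (i:ℝ) < (x:ℝ) * n ∧ (x:ℝ) * n < (i:ℝ) + 1) := by
  obtain ⟨hx0, hxn⟩ := unit_mul_n_mem (n := n) x
  set y := (x:ℝ) * n with hy
  rcases eq_or_lt_of_le (Nat.floor_le hx0) with h | h
  · left
    have hfn : Nat.floor y ≤ n := by
      rcases Nat.lt_or_ge (Nat.floor y) (n+1) with h' | h'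
      · omega
      · exfalso; have : ((n+1 : ℕ):ℝ) ≤ y := le_trans (by exact_mod_cast h') (Nat.floor_le hx0)
        push_cast at this; linarith
    refine ⟨⟨Nat.floor y, by omega⟩, Subtype.ext ?_⟩
    show (x:ℝ) = (Nat.floor y : ℝ) / n
    rw [eq_div_iff (by exact_mod_cast hn.ne' : (n:ℝ) ≠ 0), ← hy]
    exact h.symm
  · right
    have hfn : Nat.floor y < n := by
      by_contra hc
      push_neg at hc
      have : (n:ℝ) ≤ (Nat.floor y : ℝ) := by exact_mod_cast hc
      linarith [Nat.floor_le hx0]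
    exact ⟨Nat.floor y, by omega, h, Nat.lt_floor_add_one y⟩

lemma polyCurve_eq_sum {n : ℕ} (hn : 0 < n) (p : Fin (n+1) → ℝ) :
    polyCurve n p = fun t : unitInterval => p 0 + ∑ a ∈ Finset.range n,
      (p ⟨min (a+1) n, Nat.lt_succ_of_le (min_le_right _ _)⟩ -
        p ⟨min a n, Nat.lt_succ_of_le (min_le_right _ _)⟩) *
          min (max ((t:ℝ)*n - a) 0) 1 := by
  funext t
  obtain ⟨i, hi, h1, h2, hrep⟩ := polyCurve_rep hn p t
  rw [hrep]
  set x := (t:ℝ) * n with hxdef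
  set p' : ℕ → ℝ := fun a => p ⟨min a n, Nat.lt_succ_of_le (min_le_right _ _)⟩ with hp'
  have key : ∀ a ∈ Finset.range n, a ∉ Finset.range (i+1) →
      (p' (a+1) - p' a) * min (max (x - a) 0) 1 = 0 := by
    intro a _ ha
    simp only [Finset.mem_range] at ha
    have : x - a ≤ 0 := by
      have : (i:ℝ) + 1 ≤ a := by exact_mod_cast by omega
      linarith
    rw [max_eq_right this, min_eq_left (by norm_num : (0:ℝ) ≤ 1), mul_zero]
  rw [← Finset.sum_subset (Finset.range_subset_range.mpr (by omega : i+1 ≤ n)) key]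
  rw [Finset.sum_range_succ]
  have hc1 : ∀ a ∈ Finset.range i, (p' (a+1) - p' a) * min (max (x - a) 0) 1
      = p' (a+1) - p' a := by
    intro a ha
    simp only [Finset.mem_range] at ha
    have h1' : (1:ℝ) ≤ x - a := by
      have : (a:ℝ) + 1 ≤ i := by exact_mod_cast by omega
      linarith
    rw [max_eq_left (by linarith), min_eq_right h1', mul_one]
  rw [Finset.sum_congr rfl hc1, Finset.sum_range_sub (fun a => p' a)]
  have hci : min (max (x - i) 0) 1 = x - i := by
    rw [max_eq_left (by linarith), min_eq_left (by linarith)]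
  rw [hci]
  have e0 : p' 0 = p 0 := by
    simp only [hp']
    exact congrArg p (Fin.ext (by simp))
  have ei : p' i = p ⟨i, by omega⟩ := congrArg p (Fin.ext (by simp; omega))
  have ei1 : p' (i+1) = p ⟨i+1, by omega⟩ := congrArg p (Fin.ext (by simp; omega))
  rw [e0, ei, ei1]
  ring

lemma polyCurve_continuous {n : ℕ} (hn : 0 < n) (p : Fin (n+1) → ℝ) :
    Continuous (polyCurve n p) := by
  rw [polyCurve_eq_sum hn p]
  refine Continuous.add continuous_const ?_
  refine continuous_finset_sum _ (fun a _ => ?_)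
  refine Continuous.mul continuous_const ?_
  refine Continuous.min (Continuous.max ?_ continuous_const) continuous_const
  exact Continuous.sub (Continuous.mul continuous_subtype_val continuous_const) continuous_const

lemma unit_zero_le (t : unitInterval) : (0 : unitInterval) ≤ t := Subtype.mk_le_mk.mpr t.2.1

lemma unit_le_one (t : unitInterval) : t ≤ (1 : unitInterval) := Subtype.mk_le_mk.mpr t.2.2

lemma msurj_zero (f : unitInterval → unitInterval) (hfm : Monotone f)
    (hfs : Function.Surjective f) : f 0 = 0 := by
  obtain ⟨t, ht⟩ := hfs 0
  exact le_antisymm (le_trans (hfm (unit_zero_le t)) (le_of_eq ht)) (unit_zero_le _)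

lemma msurj_one (f : unitInterval → unitInterval) (hfm : Monotone f)
    (hfs : Function.Surjective f) : f 1 = 1 := by
  obtain ⟨t, ht⟩ := hfs 1
  exact le_antisymm (unit_le_one _) (le_trans (le_of_eq ht.symm) (hfm (unit_le_one t)))

lemma exists_ge_param (f : unitInterval → unitInterval) (hfm : Monotone f)
    (hfs : Function.Surjective f) (t0 : unitInterval) (y : unitInterval) (hy : f t0 ≤ y) :
    ∃ t, t0 ≤ t ∧ f t = y := by
  obtain ⟨t, ht⟩ := hfs y
  rcases le_total t0 t with h | h
  · exact ⟨t, h, ht⟩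
  · exact ⟨t0, le_refl _, le_antisymm hy (by rw [← ht]; exact hfm h)⟩

lemma exists_le_param (f : unitInterval → unitInterval) (hfm : Monotone f)
    (hfs : Function.Surjective f) (t0 : unitInterval) (y : unitInterval) (hy : y ≤ f t0) :
    ∃ t, t ≤ t0 ∧ f t = y := by
  obtain ⟨t, ht⟩ := hfs y
  rcases le_total t t0 with h | h
  · exact ⟨t, h, ht⟩
  · exact ⟨t0, le_refl _, le_antisymm (by rw [← ht]; exact hfm h) hy⟩

lemma backtrack_transfer {n : ℕ} (hn : 0 < n) (q : Fin (n+1) → ℝ) (c : ℝ) (hc : 0 ≤ c)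
    (h : ∀ i j : Fin (n+1), i ≤ j → q i - q j ≤ c) :
    ∀ s t : unitInterval, s ≤ t → polyCurve n q s - polyCurve n q t ≤ c := by
  intro s t hst
  obtain ⟨i, hi, hi1, hi2, hrep⟩ := polyCurve_rep hn q s
  obtain ⟨i', hi', hi1', hi2', hrep'⟩ := polyCurve_rep hn q t
  have hst' : (s:ℝ)*n ≤ (t:ℝ)*n :=
    mul_le_mul_of_nonneg_right (Subtype.coe_le_coe.mpr hst) (Nat.cast_nonneg n)
  have hθ0 : (0:ℝ) ≤ (s:ℝ)*n - i := by linarith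
  have hθ1 : (s:ℝ)*n - i ≤ 1 := by linarith
  have hθ0' : (0:ℝ) ≤ (t:ℝ)*n - i' := by linarith
  have hθ1' : (t:ℝ)*n - i' ≤ 1 := by linarith
  rcases Nat.lt_or_ge i i' with h1 | h1
  · -- i + 1 ≤ i'
    have hs_le : polyCurve n q s ≤ max (q ⟨i, by omega⟩) (q ⟨i+1, by omega⟩) := by
      rw [hrep]; exact comb_le_max _ _ _ hθ0 hθ1
    have ht_ge : min (q ⟨i', by omega⟩) (q ⟨i'+1, by omega⟩) ≤ polyCurve n q t := by
      rw [hrep']; exact min_le_comb _ _ _ hθ0' hθ1'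
    have key : max (q ⟨i, by omega⟩) (q ⟨i+1, by omega⟩)
        - min (q ⟨i', by omega⟩) (q ⟨i'+1, by omega⟩) ≤ c := by
      rcases max_cases (q ⟨i, by omega⟩) (q ⟨i+1, by omega⟩) with ⟨he, _⟩ | ⟨he, _⟩ <;>
        rcases min_cases (q ⟨i', by omega⟩) (q ⟨i'+1, by omega⟩) with ⟨he', _⟩ | ⟨he', _⟩ <;>
          rw [he, he'] <;> exact h _ _ (by simp [Fin.mk_le_mk]; omega)
    linarith
  · rcases Nat.lt_or_ge i' i with h2 | h2
    · -- forced degenerate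
      have hii : ((i':ℕ):ℝ) + 1 ≤ (i:ℝ) := by exact_mod_cast h2
      have e1 : (s:ℝ)*n = i := by linarith
      have e2 : (t:ℝ)*n = (i':ℝ) + 1 := by linarith
      have e3 : (i:ℝ) = (i':ℝ) + 1 := by linarith
      have e3' : i = i' + 1 := by exact_mod_cast e3
      rw [hrep, hrep', e1, e2]
      have : (⟨i, by omega⟩ : Fin (n+1)) = ⟨i'+1, by omega⟩ := Fin.ext (by simp [e3'])
      rw [this]
      ring_nf
      linarith
    · -- same edge
      have hii : i = i' := by omega
      subst hii
      rw [hrep, hrep']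
      have hd := h ⟨i, by omega⟩ ⟨i+1, by omega⟩ (by simp [Fin.mk_le_mk])
      set d := q ⟨i, by omega⟩ - q ⟨i+1, by omega⟩ with hdd
      have expand : (1 - ((s:ℝ)*n - i)) * q ⟨i, by omega⟩ + ((s:ℝ)*n - i) * q ⟨i+1, by omega⟩
          - ((1 - ((t:ℝ)*n - i)) * q ⟨i, by omega⟩ + ((t:ℝ)*n - i) * q ⟨i+1, by omega⟩)
          = (((t:ℝ)*n - i) - ((s:ℝ)*n - i)) * d := by rw [hdd]; ring
      rw [expand]
      rcases le_total d 0 with hd0 | hd0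
      · nlinarith
      · nlinarith

lemma frechetDist_le_of_witness {E : Type*} [PseudoMetricSpace E]
    (P Q : unitInterval → E) (δ : ℝ) (f g : unitInterval → unitInterval)
    (hfc : Continuous f) (hfm : Monotone f) (hfs : Function.Surjective f)
    (hgc : Continuous g) (hgm : Monotone g) (hgs : Function.Surjective g)
    (hd : ∀ t, dist (P (f t)) (Q (g t)) ≤ δ) : frechetDist P Q ≤ δ := by
  apply csInf_le
  · refine ⟨0, fun r hr => ?_⟩
    obtain ⟨f', g', _, _, _, _, _, _, hr'⟩ := hr
    exact le_trans dist_nonneg (hr' 0)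
  · exact ⟨f, g, hfc, hfm, hfs, hgc, hgm, hgs, hd⟩

lemma max_lip (A x y : ℝ) : |max A x - max A y| ≤ |x - y| := by
  have k : ∀ u v : ℝ, max A u - max A v ≤ |u - v| := by
    intro u v
    have h1 : u ≤ v + |u - v| := by
      have := le_abs_self (u - v); linarith
    have h2 : max A u ≤ max A v + |u - v| :=
      max_le (le_trans (le_max_left A v) (le_add_of_nonneg_right (abs_nonneg _)))
        (le_trans h1 (add_le_add (le_max_right A v) le_rfl))
    linarith
  rw [abs_sub_le_iff]
  exact ⟨k x y, by rw [abs_sub_comm]; exact k y x⟩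

lemma seg_frechet_le (A B δ : ℝ) (hδ : 0 ≤ δ) (hAB : A ≤ B) (R : unitInterval → ℝ)
    (hR : Continuous R) (h0 : |R 0 - A| ≤ δ) (h1 : |R 1 - B| ≤ δ)
    (hlo : ∀ t, A - δ ≤ R t) (hhi : ∀ t, R t ≤ B + δ)
    (hbt : ∀ s t : unitInterval, s ≤ t → R s - R t ≤ 2*δ) :
    frechetDist (segCurve A B) R ≤ δ := by
  obtain ⟨hl0, hl0'⟩ := abs_le.mp h0
  obtain ⟨hl1, hl1'⟩ := abs_le.mp h1
  rcases eq_or_lt_of_le hAB with hEq | hABlt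
  · -- degenerate segment
    apply frechetDist_le_of_witness _ _ _ id id continuous_id monotone_id
      Function.surjective_id continuous_id monotone_id Function.surjective_id
    intro t
    have e : segCurve A B t = A := by
      simp only [segCurve, ← hEq, smul_eq_mul]; ring
    simp only [id]
    rw [e, Real.dist_eq, abs_le]
    constructor
    · have := hhi t; rw [← hEq] at this; linarith
    · have := hlo t; linarith
  · -- main case
    have hBA : (0:ℝ) < B - A := by linarith
    have hBA' : B - A ≠ 0 := ne_of_gt hBA
    set S : unitInterval → ℝ := fun τ => sSup ((fun u => R u - δ) '' Set.Iic τ) with hSdef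
    have hne : ∀ τ : unitInterval, ((fun u => R u - δ) '' Set.Iic τ).Nonempty :=
      fun τ => ⟨R 0 - δ, ⟨0, Set.mem_Iic.mpr (unit_zero_le τ), rfl⟩⟩
    have hbdd : ∀ τ : unitInterval, BddAbove ((fun u => R u - δ) '' Set.Iic τ) := by
      intro τ
      refine ⟨B, ?_⟩
      rintro _ ⟨u, _, rfl⟩
      show R u - δ ≤ B
      have := hhi u; linarith
    set V : unitInterval → ℝ := fun τ => max A (S τ) with hVdef
    have hVA : ∀ τ, A ≤ V τ := fun τ => le_max_left _ _
    have hVB : ∀ τ, V τ ≤ B := by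
      intro τ
      refine max_le hAB (csSup_le (hne τ) ?_)
      rintro _ ⟨u, _, rfl⟩
      show R u - δ ≤ B
      have := hhi u; linarith
    have hV0 : V 0 = A := by
      refine le_antisymm (max_le (le_refl A) (csSup_le (hne 0) ?_)) (hVA 0)
      rintro _ ⟨u, hu, rfl⟩
      show R u - δ ≤ A
      have hu0 : u = 0 := le_antisymm hu (unit_zero_le u)
      rw [hu0]; linarith
    have hVle : ∀ τ, V τ ≤ R τ + δ := by
      intro τ
      refine max_le (by linarith [hlo τ]) (csSup_le (hne τ) ?_)
      rintro _ ⟨u, hu, rfl⟩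
      show R u - δ ≤ R τ + δ
      have := hbt u τ hu; linarith
    have hVge : ∀ τ, R τ - δ ≤ V τ := by
      intro τ
      exact le_trans (le_csSup (hbdd τ) ⟨τ, Set.mem_Iic.mpr (le_refl τ), rfl⟩)
        (le_max_right _ _)
    have hSmono : Monotone S := by
      intro τ τ' h
      exact csSup_le_csSup (hbdd τ') (hne τ)
        (Set.image_mono (Set.Iic_subset_Iic.mpr h))
    have hVmono : Monotone V := fun τ τ' h => max_le_max (le_refl A) (hSmono h)
    have hVcont : Continuous V := by
      have hu : UniformContinuous R := CompactSpace.uniformContinuous_of_continuous hR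
      rw [Metric.uniformContinuous_iff] at hu
      rw [Metric.continuous_iff]
      intro τ ε hε
      obtain ⟨η, hη, hhη⟩ := hu (ε/2) (by linarith)
      refine ⟨η, hη, fun τ' hττ' => ?_⟩
      have hSd : ∀ σ σ' : unitInterval, dist σ' σ < η → S σ' ≤ S σ + ε/2 := by
        intro σ σ' hd
        refine csSup_le (hne σ') ?_
        rintro _ ⟨u, hu', rfl⟩
        show R u - δ ≤ S σ + ε/2
        rcases le_total u σ with h | h
        · have h2 := le_csSup (hbdd σ) (⟨u, Set.mem_Iic.mpr h, rfl⟩ :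
            R u - δ ∈ (fun u => R u - δ) '' Set.Iic σ)
          linarith
        · have hduσ : dist u σ < η := by
            rw [Subtype.dist_eq, Real.dist_eq, abs_of_nonneg (by
              exact sub_nonneg.mpr (Subtype.coe_le_coe.mpr h))]
            rw [Subtype.dist_eq, Real.dist_eq] at hd
            have h1' : (u:ℝ) ≤ (σ':ℝ) := Subtype.coe_le_coe.mpr (Set.mem_Iic.mp hu')
            have h2' : (σ':ℝ) - (σ:ℝ) ≤ |(σ':ℝ) - (σ:ℝ)| := le_abs_self _
            linarith
          have h3 := hhη hduσ
          rw [Real.dist_eq, abs_lt] at h3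
          have hRσ : R σ - δ ≤ S σ := le_csSup (hbdd σ) (⟨σ, Set.mem_Iic.mpr (le_refl σ), rfl⟩ :
            R σ - δ ∈ (fun u => R u - δ) '' Set.Iic σ)
          linarith [h3.1, h3.2]
      have d1 : S τ' ≤ S τ + ε/2 := hSd τ τ' hττ'
      have d2 : S τ ≤ S τ' + ε/2 := hSd τ' τ (by rw [dist_comm]; exact hττ')
      have hd3 : |S τ' - S τ| ≤ ε/2 := abs_le.mpr ⟨by linarith, by linarith⟩
      have hd4 : dist (V τ') (V τ) ≤ ε/2 := by
        rw [Real.dist_eq]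
        exact le_trans (max_lip A (S τ') (S τ)) hd3
      linarith
    -- the reparametrizations
    set w1 : ℝ := (V 1 - A)/(B - A) with hw1def
    have hw10 : 0 ≤ w1 := div_nonneg (by linarith [hVA 1]) (by linarith)
    have hw11 : w1 ≤ 1 := by
      rw [hw1def, div_le_one hBA]; linarith [hVB 1]
    set proj : ℝ → unitInterval := fun r => Set.projIcc 0 1 zero_le_one r with hproj
    have hprojmem : ∀ (r : ℝ) (h0' : 0 ≤ r) (h1' : r ≤ 1),
        proj r = ⟨r, Set.mem_Icc.mpr ⟨h0', h1'⟩⟩ := by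
      intro r h0' h1'
      simp only [hproj]
      exact Set.projIcc_of_mem zero_le_one (Set.mem_Icc.mpr ⟨h0', h1'⟩)
    set F : ℝ → ℝ := fun r => if r ≤ 1/2 then (V (proj (2*r)) - A)/(B-A)
      else w1 + (2*r - 1)*(1 - w1) with hFdef
    have hF0 : F 0 = 0 := by
      simp only [hFdef]
      rw [if_pos (by norm_num)]
      have e : proj (2*0) = 0 := by
        rw [hprojmem (2*0) (by norm_num) (by norm_num)]
        apply Subtype.ext
        norm_num
      rw [e, hV0]
      simp
    have hF1 : F 1 = 1 := by
      simp only [hFdef]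
      rw [if_neg (by norm_num)]
      ring
    have hFmono : Monotone F := by
      intro r r' hrr'
      simp only [hFdef]
      rcases le_or_gt r (1/2) with h | h
      · rcases le_or_gt r' (1/2) with h' | h'
        · rw [if_pos h, if_pos h']
          have hm : V (proj (2*r)) ≤ V (proj (2*r')) :=
            hVmono (Set.monotone_projIcc zero_le_one (by linarith))
          rw [div_le_div_iff₀ hBA hBA]
          nlinarith
        · rw [if_pos h, if_neg (not_le.mpr h')]
          have hm : V (proj (2*r)) ≤ V 1 := hVmono (unit_le_one _)
          have hle : (V (proj (2*r)) - A)/(B-A) ≤ w1 := by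
            rw [hw1def, div_le_div_iff₀ hBA hBA]
            nlinarith
          nlinarith
      · rw [if_neg (not_le.mpr h), if_neg (not_le.mpr (lt_of_lt_of_le h hrr'))]
        nlinarith
    have hFcont : Continuous F := by
      simp only [hFdef]
      apply Continuous.if_le
      · refine Continuous.div_const (Continuous.sub ?_ continuous_const) _
        exact hVcont.comp ((continuous_projIcc).comp (continuous_const.mul continuous_id))
      
      · exact continuous_const.add (Continuous.mul
          ((continuous_const.mul continuous_id).sub continuous_const) continuous_const)
      · exact continuous_id
      · exact continuous_const
      · intro r hr
        rw [hr]
        have e : proj (2*(1/2 : ℝ)) = 1 := by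
          rw [hprojmem (2*(1/2:ℝ)) (by norm_num) (by norm_num)]
          apply Subtype.ext
          norm_num
        rw [e]
        rw [hw1def]
        ring
    have hFmem : ∀ r : ℝ, 0 ≤ r → r ≤ 1 → F r ∈ Set.Icc (0:ℝ) 1 := by
      intro r h0' h1'
      rw [Set.mem_Icc]
      constructor
      · rw [← hF0]; exact hFmono h0'
      · rw [← hF1]; exact hFmono h1'
    set f : unitInterval → unitInterval :=
      fun t => ⟨F t, hFmem t t.2.1 t.2.2⟩ with hfdef
    set G : ℝ → ℝ := fun r => min (2*r) 1 with hGdef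
    have hGmem : ∀ r : ℝ, 0 ≤ r → r ≤ 1 → G r ∈ Set.Icc (0:ℝ) 1 := by
      intro r h0' h1'
      rw [Set.mem_Icc]
      exact ⟨le_min (by linarith) (by norm_num), min_le_right _ _⟩
    set g : unitInterval → unitInterval :=
      fun t => ⟨G t, hGmem t t.2.1 t.2.2⟩ with hgdef
    apply frechetDist_le_of_witness _ _ _ f g
    · exact ((hFcont.comp continuous_subtype_val).subtype_mk _)
    · exact fun a b hab => Subtype.mk_le_mk.mpr (hFmono (Subtype.coe_le_coe.mpr hab))
    · intro y
      have hIVT := intermediate_value_Icc (zero_le_one (α := ℝ)) hFcont.continuousOn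
      rw [hF0, hF1] at hIVT
      obtain ⟨r, hr, hry⟩ := hIVT y.2
      exact ⟨⟨r, hr⟩, Subtype.ext hry⟩
    · exact ((continuous_const.mul continuous_subtype_val).min continuous_const).subtype_mk _
    · intro a b hab
      apply Subtype.mk_le_mk.mpr
      have := Subtype.coe_le_coe.mpr hab
      exact min_le_min (by linarith) (le_refl _)
    · intro y
      refine ⟨⟨(y:ℝ)/2, Set.mem_Icc.mpr ⟨div_nonneg y.2.1 (by norm_num),
        by linarith [y.2.2]⟩⟩, ?_⟩
      apply Subtype.ext
      show min (2*((y:ℝ)/2)) 1 = y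
      rw [show (2:ℝ)*((y:ℝ)/2) = y by ring]
      exact min_eq_left y.2.2
    · intro t
      have hseg : ∀ u : unitInterval, segCurve A B u = A + (u:ℝ)*(B-A) := by
        intro u; simp only [segCurve, smul_eq_mul]; ring
      rcases le_or_gt (t:ℝ) (1/2) with ht | ht
      · have hgt : g t = proj (2*(t:ℝ)) := by
          rw [hprojmem (2*(t:ℝ)) (by linarith [t.2.1]) (by linarith)]
          apply Subtype.ext
          show min (2*(t:ℝ)) 1 = _
          rw [min_eq_left (by linarith)]
        have hft : (f t : ℝ) = (V (proj (2*(t:ℝ))) - A)/(B-A) := by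
          show F t = _
          simp only [hFdef]
          rw [if_pos ht]
        rw [hseg (f t), hft, Real.dist_eq, hgt]
        set τ := proj (2*(t:ℝ))
        have e2 : A + (V τ - A)/(B-A)*(B-A) = V τ := by field_simp; ring
        rw [e2, abs_le]
        exact ⟨by linarith [hVge τ], by linarith [hVle τ]⟩
      · have hgt : g t = 1 := by
          apply Subtype.ext
          show min (2*(t:ℝ)) 1 = 1
          rw [min_eq_right (by linarith)]
        have hft : (f t : ℝ) = w1 + (2*(t:ℝ) - 1)*(1 - w1) := by
          show F t = _
          simp only [hFdef]
          rw [if_neg (not_le.mpr ht)]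
        have hfub : (f t : ℝ) ≤ 1 := (f t).2.2
        have hflb : w1 ≤ (f t : ℝ) := by
          rw [hft]; nlinarith [t.2.2]
        have hVw : A + w1*(B-A) = V 1 := by rw [hw1def]; field_simp; ring
        rw [hseg (f t), Real.dist_eq, hgt, abs_le]
        constructor
        · have h5 : A + w1*(B-A) ≤ A + (f t:ℝ)*(B-A) := by nlinarith
          have h6 : R 1 - δ ≤ V 1 := hVge 1
          linarith
        · have h5 : A + (f t:ℝ)*(B-A) ≤ A + 1*(B-A) := by nlinarith
          linarith

lemma vparam_coe (n : ℕ) (j : Fin (n+1)) : ((vparam n j : unitInterval) : ℝ) = (j:ℕ)/n := rfl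

lemma vparam_le_of_le {n : ℕ} (hn : 0 < n) {i j : Fin (n+1)} (h : (i:ℕ) ≤ (j:ℕ)) :
    vparam n i ≤ vparam n j := by
  have hn' : (0:ℝ) < n := Nat.cast_pos.mpr hn
  apply Subtype.mk_le_mk.mpr
  show ((i:ℕ):ℝ)/n ≤ ((j:ℕ):ℝ)/n
  rw [div_le_div_iff₀ hn' hn']
  have : ((i:ℕ):ℝ) ≤ ((j:ℕ):ℝ) := by exact_mod_cast h
  nlinarith

lemma vparam_le_mul {n : ℕ} (hn : 0 < n) (j : Fin (n+1)) (x : unitInterval)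
    (h : vparam n j ≤ x) : ((j:ℕ):ℝ) ≤ (x:ℝ)*n := by
  have hn' : (0:ℝ) < n := Nat.cast_pos.mpr hn
  have hc : ((j:ℕ):ℝ)/n ≤ (x:ℝ) := by
    rw [← vparam_coe]; exact Subtype.coe_le_coe.mpr h
  calc ((j:ℕ):ℝ) = ((j:ℕ):ℝ)/n * n := by field_simp
  _ ≤ (x:ℝ)*n := mul_le_mul_of_nonneg_right hc hn'.le

lemma vparam_le_of_mul {n : ℕ} (hn : 0 < n) (j : Fin (n+1)) (x : unitInterval)
    (h : ((j:ℕ):ℝ) ≤ (x:ℝ)*n) : vparam n j ≤ x := by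
  have hn' : (0:ℝ) < n := Nat.cast_pos.mpr hn
  apply Subtype.mk_le_mk.mpr
  show ((j:ℕ):ℝ)/n ≤ (x:ℝ)
  rw [div_le_iff₀ hn']
  exact h

lemma comb_ge_of (c d L θ θ₁ : ℝ) (h1 : L ≤ (1-θ)*c + θ*d) (hd : L ≤ d)
    (hθ : θ ≤ θ₁) (hθ1 : θ₁ ≤ 1) : L ≤ (1-θ₁)*c + θ₁*d := by
  rcases le_total c d with h | h
  · nlinarith [mul_nonneg (sub_nonneg.mpr hθ) (sub_nonneg.mpr h)]
  · nlinarith [mul_nonneg (sub_nonneg.mpr hθ1) (sub_nonneg.mpr h)]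

lemma poly_min_suffix {n : ℕ} (hn : 0 < n) (p : Fin (n+1) → ℝ) (s₀ s : unitInterval)
    (hs : s₀ ≤ s) (hlt : polyCurve n p s < polyCurve n p s₀) :
    ∃ a : Fin (n+1), (s₀:ℝ) ≤ ((vparam n a : unitInterval):ℝ) ∧ p a ≤ polyCurve n p s := by
  obtain ⟨i, hi, hi1, hi2, hrep⟩ := polyCurve_rep hn p s
  have hn' : (0:ℝ) < n := Nat.cast_pos.mpr hn
  have hθ0 : (0:ℝ) ≤ (s:ℝ)*n - i := by linarith
  have hθ1 : (s:ℝ)*n - i ≤ 1 := by linarith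
  rcases le_or_gt (s₀:ℝ) ((i:ℝ)/n) with h | h
  · rcases le_total (p ⟨i, by omega⟩) (p ⟨i+1, by omega⟩) with hpp | hpp
    · refine ⟨⟨i, by omega⟩, ?_, ?_⟩
      · rw [vparam_coe]; exact h
      · rw [hrep]; nlinarith
    · refine ⟨⟨i+1, by omega⟩, ?_, ?_⟩
      · rw [vparam_coe]
        show (s₀:ℝ) ≤ ((i+1:ℕ):ℝ)/n
        rw [le_div_iff₀ hn']
        push_cast
        have h' : (s₀:ℝ)*n ≤ i := by
          rw [le_div_iff₀ hn'] at h; linarith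
        linarith
      · rw [hrep]; nlinarith
  · have h0s : (i:ℝ) ≤ (s₀:ℝ)*n := by rw [div_lt_iff₀ hn'] at h; linarith
    have h0s2 : (s₀:ℝ)*n ≤ (i:ℝ)+1 := le_trans
      (mul_le_mul_of_nonneg_right (Subtype.coe_le_coe.mpr hs) hn'.le) hi2
    have hrep0 := polyCurve_eval_edge p i hi s₀ h0s h0s2
    have hθle : (s₀:ℝ)*n ≤ (s:ℝ)*n :=
      mul_le_mul_of_nonneg_right (Subtype.coe_le_coe.mpr hs) hn'.le
    have hmono : p ⟨i+1, by omega⟩ < p ⟨i, by omega⟩ := by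
      by_contra hcc
      push_neg at hcc
      rw [hrep, hrep0] at hlt
      nlinarith
    refine ⟨⟨i+1, by omega⟩, ?_, ?_⟩
    · rw [vparam_coe]
      show (s₀:ℝ) ≤ ((i+1:ℕ):ℝ)/n
      rw [le_div_iff₀ hn']
      push_cast
      linarith
    · rw [hrep]; nlinarith

set_option maxHeartbeats 1600000 in
lemma core_claims (δ : ℝ) (hδ : 0 < δ) (m k : ℕ) (hm : 0 < m) (hk : 0 < k)
    (p : Fin (m + 1) → ℝ) (q : Fin (k + 1) → ℝ)
    (f g : unitInterval → unitInterval)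
    (hfm : Monotone f) (hgm : Monotone g)
    (hfs : Function.Surjective f) (hgs : Function.Surjective g)
    (hreal : ∀ t : unitInterval, |polyCurve m p (f t) - polyCurve k q (g t)| ≤ δ)
    (hQr : ∀ s : unitInterval, polyCurve k q s ∈ Set.uIcc (q 0) (q (Fin.last k)))
    (hnv : ∀ (j : Fin (k + 1)) (a : Fin (m + 1)),
      0 < (j : ℕ) → (j : ℕ) < k → 0 < (a : ℕ) → (a : ℕ) < m →
        ¬ Visits δ m k p q f g j a)
    (hAB : q 0 ≤ q (Fin.last k)) :
    (∀ i j : Fin (k+1), i ≤ j → q i - q j ≤ 2*δ) ∧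
    (∀ a b : Fin (m+1), a ≤ b → p a - p b ≤ 2*δ) := by
  have hkR : (0:ℝ) < k := Nat.cast_pos.mpr hk
  have hmR : (0:ℝ) < m := Nat.cast_pos.mpr hm
  have hQrange : ∀ s : unitInterval,
      q 0 ≤ polyCurve k q s ∧ polyCurve k q s ≤ q (Fin.last k) := by
    intro s
    have := hQr s
    rw [Set.uIcc_of_le hAB, Set.mem_Icc] at this
    exact this
  have hq01 : ∀ i : Fin (k+1), q 0 ≤ q i ∧ q i ≤ q (Fin.last k) := by
    intro i
    have := hQrange (vparam k i)
    rwa [polyCurve_vertex hk] at this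
  have hf0 : f 0 = 0 := msurj_zero f hfm hfs
  have hg0 : g 0 = 0 := msurj_zero g hgm hgs
  have hp0 : |p 0 - q 0| ≤ δ := by
    have := hreal 0
    rwa [hf0, hg0, polyCurve_zero hm, polyCurve_zero hk] at this
  have hf1 : f 1 = 1 := msurj_one f hfm hfs
  have hg1 : g 1 = 1 := msurj_one g hgm hgs
  have hpm : |p (Fin.last m) - q (Fin.last k)| ≤ δ := by
    have := hreal 1
    rwa [hf1, hg1, polyCurve_one hm, polyCurve_one hk] at this
  have hpr : ∀ a : Fin (m+1), q 0 - δ ≤ p a ∧ p a ≤ q (Fin.last k) + δ := by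
    intro a
    obtain ⟨t, ht⟩ := hfs (vparam m a)
    have h1 := hreal t
    rw [ht, polyCurve_vertex hm, abs_le] at h1
    have h2 := hQrange (g t)
    constructor <;> linarith [h1.1, h1.2, h2.1, h2.2]
  -- ============ CLAIM A ============
  have claimA : ∀ i j : Fin (k+1), i ≤ j → q i - q j ≤ 2*δ := by
    by_contra hcon
    push_neg at hcon
    obtain ⟨i0, j0, hij0, hgt0⟩ := hcon
    have hsne : (Finset.univ.filter
        (fun x : Fin (k+1) × Fin (k+1) => x.1 ≤ x.2)).Nonempty :=
      ⟨(i0, j0), by simp [hij0]⟩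
    obtain ⟨xm, hxmem, hxmax⟩ := Finset.exists_max_image _ (fun x => q x.1 - q x.2) hsne
    set j := xm.1 with hjdef
    set j' := xm.2 with hj'def
    have hjj' : j ≤ j' := by
      have := Finset.mem_filter.mp hxmem
      exact this.2
    have hbig : 2*δ < q j - q j' :=
      lt_of_lt_of_le hgt0 (hxmax (i0, j0) (by simp [hij0]))
    have hmax1 : ∀ i : Fin (k+1), i ≤ j' → q i ≤ q j := by
      intro i hi
      have := hxmax (i, j') (by simp [hi])
      simp only at this
      linarith
    have hmax2 : ∀ i : Fin (k+1), j ≤ i → q j' ≤ q i := by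
      intro i hi
      have := hxmax (j, i) (by simp [hi])
      simp only at this
      linarith
    have hj0 : 0 < (j:ℕ) := by
      rcases Nat.eq_zero_or_pos (j:ℕ) with h | h
      · exfalso
        have : j = 0 := Fin.ext (by simp [h])
        rw [this] at hbig
        have := (hq01 j').1
        linarith
      · exact h
    have hj'k : (j':ℕ) < k := by
      rcases Nat.lt_or_ge (j':ℕ) k with h | h
      · exact h
      · exfalso
        have : j' = Fin.last k := Fin.ext (by have := j'.isLt; simp [Fin.last]; omega)
        rw [this] at hbig
        have := (hq01 j).2
        linarith
    have hjlt : (j:ℕ) < (j':ℕ) := by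
      rcases Nat.lt_or_ge (j:ℕ) (j':ℕ) with h | h
      · exact h
      · exfalso
        have : j = j' := le_antisymm hjj' h
        rw [this] at hbig
        linarith
    -- continuous versions of maximality
    have hQle : ∀ s : unitInterval, (s:ℝ) ≤ ((vparam k j' : unitInterval):ℝ) →
        polyCurve k q s ≤ q j := by
      intro s hs
      obtain ⟨i, hi, hi1, hi2, hrep⟩ := polyCurve_rep hk q s
      have hsk : (s:ℝ)*k ≤ ((j':ℕ):ℝ) := by
        rw [vparam_coe] at hs
        calc (s:ℝ)*k ≤ (((j':ℕ):ℝ)/k)*k := mul_le_mul_of_nonneg_right hs hkR.le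
        _ = ((j':ℕ):ℝ) := by field_simp
      rcases Nat.lt_or_ge i (j':ℕ) with hij | hij
      · have b1 : q ⟨i, by omega⟩ ≤ q j := hmax1 ⟨i, by omega⟩ (by
          rw [Fin.le_def]; simp; omega)
        have b2 : q ⟨i+1, by omega⟩ ≤ q j := hmax1 ⟨i+1, by omega⟩ (by
          rw [Fin.le_def]; simp; omega)
        rw [hrep]
        have := comb_le_max (q ⟨i, by omega⟩) (q ⟨i+1, by omega⟩) ((s:ℝ)*k - i)
          (by linarith) (by linarith)
        rcases max_cases (q ⟨i, by omega⟩) (q ⟨i+1, by omega⟩) with ⟨he, _⟩ | ⟨he, _⟩ <;>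
          rw [he] at this <;> linarith
      · have hile : ((j':ℕ):ℝ) ≤ (i:ℝ) := by exact_mod_cast hij
        have e : (s:ℝ)*k = (i:ℝ) := by linarith
        have hieq : i ≤ (j':ℕ) := by
          have : (i:ℝ) ≤ ((j':ℕ):ℝ) := by linarith
          exact_mod_cast this
        have hQs : polyCurve k q s = q ⟨i, by omega⟩ := by rw [hrep, e]; ring_nf
        rw [hQs]
        exact hmax1 ⟨i, by omega⟩ (by rw [Fin.le_def]; simp; omega)
    have hQge : ∀ s : unitInterval, ((vparam k j : unitInterval):ℝ) ≤ (s:ℝ) →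
        q j' ≤ polyCurve k q s := by
      intro s hs
      obtain ⟨i, hi, hi1, hi2, hrep⟩ := polyCurve_rep hk q s
      have hsk : ((j:ℕ):ℝ) ≤ (s:ℝ)*k := by
        rw [vparam_coe] at hs
        calc ((j:ℕ):ℝ) = (((j:ℕ):ℝ)/k)*k := by field_simp
        _ ≤ (s:ℝ)*k := mul_le_mul_of_nonneg_right hs hkR.le
      rcases le_or_gt (j:ℕ) i with hij | hij
      · have b1 : q j' ≤ q ⟨i, by omega⟩ := hmax2 ⟨i, by omega⟩ (by
          rw [Fin.le_def]; simp; omega)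
        have b2 : q j' ≤ q ⟨i+1, by omega⟩ := hmax2 ⟨i+1, by omega⟩ (by
          rw [Fin.le_def]; simp; omega)
        rw [hrep]
        have := min_le_comb (q ⟨i, by omega⟩) (q ⟨i+1, by omega⟩) ((s:ℝ)*k - i)
          (by linarith) (by linarith)
        rcases min_cases (q ⟨i, by omega⟩) (q ⟨i+1, by omega⟩) with ⟨he, _⟩ | ⟨he, _⟩ <;>
          rw [he] at this <;> linarith
      · have hile : (i:ℝ) + 1 ≤ ((j:ℕ):ℝ) := by exact_mod_cast hij
        have e : (s:ℝ)*k = (i:ℝ) + 1 := by linarith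
        have hieq : (j:ℕ) ≤ i + 1 := by
          have : ((j:ℕ):ℝ) ≤ (i:ℝ) + 1 := by linarith
          exact_mod_cast this
        have hQs : polyCurve k q s = q ⟨i+1, by omega⟩ := by rw [hrep, e]; ring_nf
        rw [hQs]
        exact hmax2 ⟨i+1, by omega⟩ (by rw [Fin.le_def]; simp; omega)
    -- matched times
    obtain ⟨β, hβ⟩ := hgs (vparam k j)
    obtain ⟨t', ht'⟩ := hgs (vparam k j')
    have hvjj' : vparam k j < vparam k j' := by
      apply Subtype.mk_lt_mk.mpr
      show ((j:ℕ):ℝ)/k < ((j':ℕ):ℝ)/k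
      rw [div_lt_div_iff₀ hkR hkR]
      have : ((j:ℕ):ℝ) < ((j':ℕ):ℝ) := by exact_mod_cast hjlt
      nlinarith
    have hβt' : β ≤ t' := by
      by_contra h
      push_neg at h
      have := hgm h.le
      rw [hβ, ht'] at this
      exact absurd this (not_le.mpr hvjj')
    have hPβ : |polyCurve m p (f β) - q j| ≤ δ := by
      have := hreal β; rwa [hβ, polyCurve_vertex hk] at this
    have hPt' : |polyCurve m p (f t') - q j'| ≤ δ := by
      have := hreal t'; rwa [ht', polyCurve_vertex hk] at this
    rw [abs_le] at hPβ hPt'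
    have hdrop : polyCurve m p (f t') < polyCurve m p (f β) := by linarith
    obtain ⟨a, hvap, hpa⟩ := poly_min_suffix hm p (f β) (f t') (hfm hβt') hdrop
    have hpa_ub : p a ≤ q j' + δ := by linarith
    have ham : (a:ℕ) < m := by
      rcases Nat.lt_or_ge (a:ℕ) m with h | h
      · exact h
      · exfalso
        have : a = Fin.last m := Fin.ext (by have := a.isLt; simp [Fin.last]; omega)
        rw [this] at hpa
        rw [abs_le] at hpm
        have := (hq01 j).2
        linarith
    have ha0 : 0 < (a:ℕ) := by
      rcases Nat.eq_zero_or_pos (a:ℕ) with h | h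
      · exfalso
        have ha' : a = 0 := Fin.ext (by simp [h])
        rw [ha'] at hvap
        rw [vparam_coe] at hvap
        simp at hvap
        have hfβ0 : f β = 0 := by
          apply Subtype.ext
          exact le_antisymm (by exact_mod_cast hvap) (f β).2.1
        rw [hfβ0, polyCurve_zero hm] at hPβ
        rw [ha'] at hpa
        rw [abs_le] at hp0
        have h1 := (hq01 j').1
        linarith
      · exact h
    obtain ⟨tst, htβ, hftst⟩ := exists_ge_param f hfm hfs β (vparam m a)
      (Subtype.coe_le_coe.mp (by rw [vparam_coe]; exact hvap))
    have hband : |p a - polyCurve k q (g tst)| ≤ δ := by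
      have := hreal tst
      rwa [hftst, polyCurve_vertex hm] at this
    rw [abs_le] at hband
    set x := g tst with hxdef
    have hxj : vparam k j ≤ x := by rw [← hβ]; exact hgm htβ
    have hQx_ge : q j' ≤ polyCurve k q x :=
      hQge x (Subtype.coe_le_coe.mpr hxj)
    have hpa_lb : q j' - δ ≤ p a := by linarith
    rcases pos_cases hk x with ⟨j'', hj''⟩ | ⟨i, hik, hi1, hi2⟩
    · -- x is a vertex of Q
      have hQx : polyCurve k q x = q j'' := by rw [hj'', polyCurve_vertex hk]
      have hcl : |q j'' - p a| ≤ δ := by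
        rw [hQx] at hband
        rw [abs_le]
        constructor <;> linarith
      have hj''j : (j:ℕ) ≤ (j'':ℕ) := by
        have h1 : ((j:ℕ):ℝ) ≤ (x:ℝ)*k := vparam_le_mul hk j x hxj
        have h2 : (x:ℝ)*k = ((j'':ℕ):ℝ) := by rw [hj'']; exact vparam_mul hk j''
        have : ((j:ℕ):ℝ) ≤ ((j'':ℕ):ℝ) := by linarith
        exact_mod_cast this
      rcases Nat.lt_or_ge (j'':ℕ) k with hlt | hge
      · exact hnv j'' a (by omega) hlt ha0 ham ⟨hcl, Or.inr ⟨tst, hftst, by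
          rw [show (g tst : ℝ) * k = ((j'':ℕ):ℝ) from by rw [← hxdef, hj'']; exact vparam_mul hk j'']
          simp⟩⟩
      · have hj''l : j'' = Fin.last k := Fin.ext (by have := j''.isLt; simp [Fin.last]; omega)
        rw [hj''l] at hcl
        rw [abs_le] at hcl
        have := (hq01 j).2
        linarith
    · -- x is interior to edge i
      have hij : (j:ℕ) ≤ i := by
        have h1 : ((j:ℕ):ℝ) ≤ (x:ℝ)*k := vparam_le_mul hk j x hxj
        have : ((j:ℕ):ℝ) < (i:ℝ) + 1 := by linarith
        have : (j:ℕ) < i + 1 := by exact_mod_cast this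
        omega
      have hrepx := polyCurve_eval_edge q i hik x hi1.le hi2.le
      have hqi_ge : q j' ≤ q ⟨i, by omega⟩ := hmax2 ⟨i, by omega⟩ (by
        rw [Fin.le_def]; simp; omega)
      have hqi1_ge : q j' ≤ q ⟨i+1, by omega⟩ := hmax2 ⟨i+1, by omega⟩ (by
        rw [Fin.le_def]; simp; omega)
      have hend : |q ⟨i, by omega⟩ - p a| ≤ δ ∨ |q ⟨i+1, by omega⟩ - p a| ≤ δ := by
        by_contra hne
        push_neg at hne
        obtain ⟨h1, h2⟩ := hne
        have e1 : δ < q ⟨i, by omega⟩ - p a := by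
          by_contra h
          push_neg at h
          exact absurd (abs_le.mpr ⟨by linarith, h⟩) (not_le.mpr h1)
        have e2 : δ < q ⟨i+1, by omega⟩ - p a := by
          by_contra h
          push_neg at h
          exact absurd (abs_le.mpr ⟨by linarith, h⟩) (not_le.mpr h2)
        have hmin := min_le_comb (q ⟨i, by omega⟩) (q ⟨i+1, by omega⟩) ((x:ℝ)*k - i)
          (by linarith) (by linarith)
        rw [← hrepx] at hmin
        rcases min_cases (q ⟨i, by omega⟩) (q ⟨i+1, by omega⟩) with ⟨he, _⟩ | ⟨he, _⟩ <;>
          rw [he] at hmin <;> linarith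
      rcases hend with hcl | hcl
      · have hvis : |(g tst : ℝ) * k - (((⟨i, by omega⟩ : Fin (k+1)):ℕ):ℝ)| < 1 := by
          have e : ((⟨i, by omega⟩ : Fin (k+1)):ℕ) = i := rfl
          rw [e, ← hxdef, abs_lt]
          constructor <;> push_cast <;> linarith
        exact hnv ⟨i, by omega⟩ a (by show 0 < i; omega) (by show i < k; omega) ha0 ham
          ⟨hcl, Or.inr ⟨tst, hftst, hvis⟩⟩
      · rcases Nat.lt_or_ge (i+1) k with hin | hin
        · have hvis : |(g tst : ℝ) * k - (((⟨i+1, by omega⟩ : Fin (k+1)):ℕ):ℝ)| < 1 := by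
            have e : ((⟨i+1, by omega⟩ : Fin (k+1)):ℕ) = i+1 := rfl
            rw [e, ← hxdef, abs_lt]
            constructor <;> push_cast <;> linarith
          exact hnv ⟨i+1, by omega⟩ a (by show 0 < i+1; omega) hin ha0 ham
            ⟨hcl, Or.inr ⟨tst, hftst, hvis⟩⟩
        · have hlast : (⟨i+1, by omega⟩ : Fin (k+1)) = Fin.last k :=
            Fin.ext (by simp [Fin.last]; omega)
          rw [hlast] at hcl
          rw [abs_le] at hcl
          have := (hq01 j).2
          linarith
  -- ============ CLAIM B ============
  have hQbt : ∀ s t : unitInterval, s ≤ t →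
      polyCurve k q s - polyCurve k q t ≤ 2*δ :=
    backtrack_transfer hk q (2*δ) (by linarith) claimA
  have claimB : ∀ a b : Fin (m+1), a ≤ b → p a - p b ≤ 2*δ := by
    by_contra hcon
    push_neg at hcon
    obtain ⟨a0, b0, hab0, hgt0⟩ := hcon
    have hsne : (Finset.univ.filter
        (fun x : Fin (m+1) × Fin (m+1) => x.1 ≤ x.2)).Nonempty :=
      ⟨(a0, b0), by simp [hab0]⟩
    obtain ⟨xm, hxmem, hxmax⟩ := Finset.exists_max_image _ (fun x => p x.1 - p x.2) hsne
    set a := xm.1 with hadef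
    set a' := xm.2 with ha'def
    have haa'le : a ≤ a' := (Finset.mem_filter.mp hxmem).2
    have hbig : 2*δ < p a - p a' :=
      lt_of_lt_of_le hgt0 (hxmax (a0, b0) (by simp [hab0]))
    have hmax1 : ∀ b : Fin (m+1), b ≤ a' → p b ≤ p a := by
      intro b hb
      have := hxmax (b, a') (by simp [hb])
      simp only at this
      linarith
    have hmax2 : ∀ b : Fin (m+1), a ≤ b → p a' ≤ p b := by
      intro b hb
      have := hxmax (a, b) (by simp [hb])
      simp only at this
      linarith
    have hpa'lb : q 0 - δ ≤ p a' := (hpr a').1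
    have hpaub : p a ≤ q (Fin.last k) + δ := (hpr a).2
    rw [abs_le] at hp0 hpm
    have ha0 : 0 < (a:ℕ) := by
      rcases Nat.eq_zero_or_pos (a:ℕ) with h | h
      · exfalso
        have : a = 0 := Fin.ext (by simp [h])
        rw [this] at hbig
        linarith [hp0.2]
      · exact h
    have ha'm : (a':ℕ) < m := by
      rcases Nat.lt_or_ge (a':ℕ) m with h | h
      · exact h
      · exfalso
        have : a' = Fin.last m := Fin.ext (by have := a'.isLt; simp [Fin.last]; omega)
        rw [this] at hbig
        linarith [hpm.1]
    have haa' : (a:ℕ) < (a':ℕ) := by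
      rcases Nat.lt_or_ge (a:ℕ) (a':ℕ) with h | h
      · exact h
      · exfalso
        have : a = a' := le_antisymm haa'le (by rw [Fin.le_def]; omega)
        rw [this] at hbig
        linarith
    have hPle : ∀ s : unitInterval, (s:ℝ) ≤ ((vparam m a' : unitInterval):ℝ) →
        polyCurve m p s ≤ p a := by
      intro s hs
      obtain ⟨i, hi, hi1, hi2, hrep⟩ := polyCurve_rep hm p s
      have hsk : (s:ℝ)*m ≤ ((a':ℕ):ℝ) := by
        rw [vparam_coe] at hs
        calc (s:ℝ)*m ≤ (((a':ℕ):ℝ)/m)*m := mul_le_mul_of_nonneg_right hs hmR.le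
        _ = ((a':ℕ):ℝ) := by field_simp
      rcases Nat.lt_or_ge i (a':ℕ) with hij | hij
      · have b1 : p ⟨i, by omega⟩ ≤ p a := hmax1 ⟨i, by omega⟩ (by
          rw [Fin.le_def]; simp; omega)
        have b2 : p ⟨i+1, by omega⟩ ≤ p a := hmax1 ⟨i+1, by omega⟩ (by
          rw [Fin.le_def]; simp; omega)
        rw [hrep]
        have := comb_le_max (p ⟨i, by omega⟩) (p ⟨i+1, by omega⟩) ((s:ℝ)*m - i)
          (by linarith) (by linarith)
        rcases max_cases (p ⟨i, by omega⟩) (p ⟨i+1, by omega⟩) with ⟨he, _⟩ | ⟨he, _⟩ <;>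
          rw [he] at this <;> linarith
      · have hile : ((a':ℕ):ℝ) ≤ (i:ℝ) := by exact_mod_cast hij
        have e : (s:ℝ)*m = (i:ℝ) := by linarith
        have hieq : i ≤ (a':ℕ) := by
          have : (i:ℝ) ≤ ((a':ℕ):ℝ) := by linarith
          exact_mod_cast this
        have hPs : polyCurve m p s = p ⟨i, by omega⟩ := by rw [hrep, e]; ring_nf
        rw [hPs]
        exact hmax1 ⟨i, by omega⟩ (by rw [Fin.le_def]; simp; omega)
    obtain ⟨ta, hfta⟩ := hfs (vparam m a)
    obtain ⟨ta', hfta'⟩ := hfs (vparam m a')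
    have hvaa' : vparam m a < vparam m a' := by
      apply Subtype.mk_lt_mk.mpr
      show ((a:ℕ):ℝ)/m < ((a':ℕ):ℝ)/m
      rw [div_lt_div_iff₀ hmR hmR]
      have : ((a:ℕ):ℝ) < ((a':ℕ):ℝ) := by exact_mod_cast haa'
      nlinarith
    have htata' : ta ≤ ta' := by
      by_contra h
      push_neg at h
      have := hfm h.le
      rw [hfta, hfta'] at this
      exact absurd this (not_le.mpr hvaa')
    have hband : |p a - polyCurve k q (g ta)| ≤ δ := by
      have := hreal ta; rwa [hfta, polyCurve_vertex hm] at this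
    have hband' : |p a' - polyCurve k q (g ta')| ≤ δ := by
      have := hreal ta'; rwa [hfta', polyCurve_vertex hm] at this
    rw [abs_le] at hband hband'
    set x := g ta with hxdef
    set x₁ := g ta' with hx₁def
    have hxx₁ : x ≤ x₁ := hgm htata'
    have hQx_lb : p a - δ ≤ polyCurve k q x := by linarith [hband.1]
    have hQx_ub : polyCurve k q x ≤ p a + δ := by linarith [hband.2]
    have hQx₁_ub : polyCurve k q x₁ ≤ p a' + δ := by linarith [hband'.1]
    have hAlt : q 0 + δ < p a := by linarith
    rcases pos_cases hk x with ⟨j, hj⟩ | ⟨i, hik, hi1, hi2⟩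
    · have hQx : polyCurve k q x = q j := by rw [hj, polyCurve_vertex hk]
      rcases Nat.eq_zero_or_pos (j:ℕ) with hj0 | hj0
      · have : j = 0 := Fin.ext (by simp [hj0])
        rw [this] at hQx
        rw [hQx] at hQx_lb
        linarith
      · rcases Nat.lt_or_ge (j:ℕ) k with hjk | hjk
        · refine absurd ?_ (hnv j a hj0 hjk ha0 (by omega))
          refine ⟨?_, Or.inr ⟨ta, hfta, ?_⟩⟩
          · rw [hQx] at hQx_lb hQx_ub
            rw [abs_le]
            constructor <;> linarith
          · rw [show (g ta : ℝ)*k = ((j:ℕ):ℝ) from by rw [← hxdef, hj]; exact vparam_mul hk j]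
            simp
        · have hjl : j = Fin.last k := Fin.ext (by have := j.isLt; simp [Fin.last]; omega)
          rw [hjl, ← unit_one_eq_vparam hk] at hj
          have hx₁1 : x₁ = 1 := le_antisymm (unit_le_one _) (hj ▸ hxx₁)
          rw [hj] at hQx_lb
          rw [hx₁1] at hQx₁_ub
          linarith
    · -- interior of edge i
      have hrepx := polyCurve_eval_edge q i hik x hi1.le hi2.le
      by_cases hbi : |q ⟨i, by omega⟩ - p a| ≤ δ
      · rcases Nat.eq_zero_or_pos i with hi0 | hi0
        · have e : (⟨i, by omega⟩ : Fin (k+1)) = 0 := Fin.ext (by simp [hi0])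
          rw [e] at hbi
          rw [abs_le] at hbi
          linarith [hbi.1]
        · refine absurd ?_ (hnv ⟨i, by omega⟩ a (by show 0 < i; omega) (by show i < k; omega) ha0 (by omega))
          refine ⟨hbi, Or.inr ⟨ta, hfta, ?_⟩⟩
          have e : ((⟨i, by omega⟩ : Fin (k+1)):ℕ) = i := rfl
          have hgx : (x:ℝ) = ((g ta : unitInterval):ℝ) := by rw [hxdef]
          rw [e, abs_lt]
          constructor <;> push_cast <;> linarith [hi1, hi2, hgx]
      · by_cases hbi1 : |q ⟨i+1, by omega⟩ - p a| ≤ δ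
        · rcases Nat.lt_or_ge (i+1) k with hin | hin
          · refine absurd ?_ (hnv ⟨i+1, by omega⟩ a (by show 0 < i+1; omega) hin ha0 (by omega))
            refine ⟨hbi1, Or.inr ⟨ta, hfta, ?_⟩⟩
            have e : ((⟨i+1, by omega⟩ : Fin (k+1)):ℕ) = i+1 := rfl
            have hgx : (x:ℝ) = ((g ta : unitInterval):ℝ) := by rw [hxdef]
            rw [e, abs_lt]
            constructor <;> push_cast <;> linarith [hi1, hi2, hgx]
          · -- i+1 = k : last edge, use linearity on the edge
            have hik1 : i + 1 = k := by omega
            have hx₁i : (i:ℝ) ≤ (x₁:ℝ)*k := le_trans hi1.le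
              (mul_le_mul_of_nonneg_right (Subtype.coe_le_coe.mpr hxx₁) hkR.le)
            have hx₁i2 : (x₁:ℝ)*k ≤ (i:ℝ)+1 := by
              have h2 := (unit_mul_n_mem (n := k) x₁).2
              have e3 : ((i:ℕ):ℝ)+1 = ((i+1:ℕ):ℝ) := by push_cast; ring
              rw [e3, hik1]
              exact h2
            have hrepx₁ := polyCurve_eval_edge q i hik x₁ hx₁i hx₁i2
            rw [abs_le] at hbi1
            have hd_ge : p a - δ ≤ q ⟨i+1, by omega⟩ := by linarith [hbi1.1]
            have hcomb := comb_ge_of (q ⟨i, by omega⟩) (q ⟨i+1, by omega⟩) (p a - δ)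
              ((x:ℝ)*k - i) ((x₁:ℝ)*k - i) (by rw [← hrepx]; exact hQx_lb) hd_ge
              (by nlinarith [Subtype.coe_le_coe.mpr hxx₁, hkR.le]) (by linarith)
            rw [← hrepx₁] at hcomb
            linarith
        · -- neither endpoint within δ of p a : straddle
          have e1 : δ < |q ⟨i, by omega⟩ - p a| := not_le.mp hbi
          have e2 : δ < |q ⟨i+1, by omega⟩ - p a| := not_le.mp hbi1
          have hcomb_lb := min_le_comb (q ⟨i, by omega⟩) (q ⟨i+1, by omega⟩) ((x:ℝ)*k - i)
            (by linarith) (by linarith)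
          have hcomb_ub := comb_le_max (q ⟨i, by omega⟩) (q ⟨i+1, by omega⟩) ((x:ℝ)*k - i)
            (by linarith) (by linarith)
          rw [← hrepx] at hcomb_lb hcomb_ub
          have hstraddle : (q ⟨i+1, by omega⟩ < p a - δ ∧ p a + δ < q ⟨i, by omega⟩) ∨
              (q ⟨i, by omega⟩ < p a - δ ∧ p a + δ < q ⟨i+1, by omega⟩) := by
            rcases lt_or_ge (q ⟨i, by omega⟩) (p a) with hc | hc <;>
              rcases lt_or_ge (q ⟨i+1, by omega⟩) (p a) with hd | hd
            · exfalso
              have c1 : q ⟨i, by omega⟩ < p a - δ := by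
                rcases abs_cases (q ⟨i, by omega⟩ - p a) with ⟨he, _⟩ | ⟨he, _⟩ <;> linarith
              have c2 : q ⟨i+1, by omega⟩ < p a - δ := by
                rcases abs_cases (q ⟨i+1, by omega⟩ - p a) with ⟨he, _⟩ | ⟨he, _⟩ <;> linarith
              rcases max_cases (q ⟨i, by omega⟩) (q ⟨i+1, by omega⟩) with ⟨he, _⟩ | ⟨he, _⟩ <;>
                rw [he] at hcomb_ub <;> linarith
            · right
              constructor
              · rcases abs_cases (q ⟨i, by omega⟩ - p a) with ⟨he, _⟩ | ⟨he, _⟩ <;> linarith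
              · rcases abs_cases (q ⟨i+1, by omega⟩ - p a) with ⟨he, _⟩ | ⟨he, _⟩ <;> linarith
            · left
              constructor
              · rcases abs_cases (q ⟨i+1, by omega⟩ - p a) with ⟨he, _⟩ | ⟨he, _⟩ <;> linarith
              · rcases abs_cases (q ⟨i, by omega⟩ - p a) with ⟨he, _⟩ | ⟨he, _⟩ <;> linarith
            · exfalso
              have c1 : p a + δ < q ⟨i, by omega⟩ := by
                rcases abs_cases (q ⟨i, by omega⟩ - p a) with ⟨he, _⟩ | ⟨he, _⟩ <;> linarith
              have c2 : p a + δ < q ⟨i+1, by omega⟩ := by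
                rcases abs_cases (q ⟨i+1, by omega⟩ - p a) with ⟨he, _⟩ | ⟨he, _⟩ <;> linarith
              rcases min_cases (q ⟨i, by omega⟩) (q ⟨i+1, by omega⟩) with ⟨he, _⟩ | ⟨he, _⟩ <;>
                rw [he] at hcomb_lb <;> linarith
          rcases hstraddle with ⟨hlow, hhigh⟩ | ⟨hlow, hhigh⟩
          · -- high endpoint is q_i, matched earlier
            have hvx : vparam k ⟨i, by omega⟩ ≤ x :=
              vparam_le_of_mul hk ⟨i, by omega⟩ x (by
                show ((i:ℕ):ℝ) ≤ (x:ℝ)*k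
                exact_mod_cast hi1.le)
            obtain ⟨t, htta, hgt⟩ := exists_le_param g hgm hgs ta (vparam k ⟨i, by omega⟩) hvx
            have hftle : f t ≤ vparam m a' := le_trans (by rw [← hfta]; exact hfm htta)
              (vparam_le_of_le hm haa'.le)
            have hPle' : polyCurve m p (f t) ≤ p a :=
              hPle (f t) (Subtype.coe_le_coe.mpr hftle)
            have hb := hreal t
            rw [hgt, polyCurve_vertex hk, abs_le] at hb
            linarith [hb.1]
          · -- high endpoint is q_{i+1}
            rcases le_or_gt ((x₁:ℝ)*k) ((i:ℝ)+1) with hcase | hcase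
            · have hx₁i : (i:ℝ) ≤ (x₁:ℝ)*k := le_trans hi1.le
                (mul_le_mul_of_nonneg_right (Subtype.coe_le_coe.mpr hxx₁) hkR.le)
              have hrepx₁ := polyCurve_eval_edge q i hik x₁ hx₁i hcase
              have hcomb := comb_ge_of (q ⟨i, by omega⟩) (q ⟨i+1, by omega⟩) (p a - δ)
                ((x:ℝ)*k - i) ((x₁:ℝ)*k - i) (by rw [← hrepx]; exact hQx_lb)
                (by linarith)
                (by nlinarith [Subtype.coe_le_coe.mpr hxx₁, hkR.le]) (by linarith)
              rw [← hrepx₁] at hcomb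
              linarith
            · have hvx₁ : vparam k ⟨i+1, by omega⟩ ≤ x₁ :=
                vparam_le_of_mul hk ⟨i+1, by omega⟩ x₁ (by
                  show ((i+1:ℕ):ℝ) ≤ (x₁:ℝ)*k
                  push_cast
                  linarith)
              have hbt := hQbt (vparam k ⟨i+1, by omega⟩) x₁ hvx₁
              rw [polyCurve_vertex hk] at hbt
              linarith
  exact ⟨claimA, claimB⟩

lemma frechetDist_neg (P Q : unitInterval → ℝ) :
    frechetDist (fun t => -(P t)) (fun t => -(Q t)) = frechetDist P Q := by
  unfold frechetDist
  congr 1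
  ext r
  simp only [Set.mem_setOf_eq, dist_neg_neg]

lemma segCurve_neg (A B : ℝ) :
    segCurve (-A) (-B) = (fun t => -(segCurve A B t)) := by
  funext t
  simp only [segCurve, smul_eq_mul]
  ring

lemma polyCurve_neg (n : ℕ) (p : Fin (n+1) → ℝ) :
    polyCurve n (fun i => -(p i)) = (fun t => -(polyCurve n p t)) := by
  funext t
  simp only [polyCurve, smul_eq_mul]
  ring

lemma main_half (δ : ℝ) (hδ : 0 < δ)
    (m k : ℕ) (hm : 0 < m) (hk : 0 < k)
    (p : Fin (m + 1) → ℝ) (q : Fin (k + 1) → ℝ)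
    (f g : unitInterval → unitInterval)
    (hfm : Monotone f) (hgm : Monotone g)
    (hfs : Function.Surjective f) (hgs : Function.Surjective g)
    (hreal : ∀ t : unitInterval, |polyCurve m p (f t) - polyCurve k q (g t)| ≤ δ)
    (hQr : ∀ s : unitInterval, polyCurve k q s ∈ Set.uIcc (q 0) (q (Fin.last k)))
    (hnv : ∀ (j : Fin (k + 1)) (a : Fin (m + 1)),
      0 < (j : ℕ) → (j : ℕ) < k → 0 < (a : ℕ) → (a : ℕ) < m →
        ¬ Visits δ m k p q f g j a)
    (hAB : q 0 ≤ q (Fin.last k)) :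
    frechetDist (segCurve (q 0) (q (Fin.last k))) (polyCurve k q) ≤ δ ∧
    frechetDist (segCurve (q 0) (q (Fin.last k))) (polyCurve m p) ≤ δ := by
  obtain ⟨cA, cB⟩ := core_claims δ hδ m k hm hk p q f g hfm hgm hfs hgs hreal hQr hnv hAB
  have hQrange : ∀ s : unitInterval,
      q 0 ≤ polyCurve k q s ∧ polyCurve k q s ≤ q (Fin.last k) := by
    intro s
    have := hQr s
    rwa [Set.uIcc_of_le hAB, Set.mem_Icc] at this
  have hf0 : f 0 = 0 := msurj_zero f hfm hfs
  have hg0 : g 0 = 0 := msurj_zero g hgm hgs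
  have hf1 : f 1 = 1 := msurj_one f hfm hfs
  have hg1 : g 1 = 1 := msurj_one g hgm hgs
  have hp0 : |p 0 - q 0| ≤ δ := by
    have := hreal 0
    rwa [hf0, hg0, polyCurve_zero hm, polyCurve_zero hk] at this
  have hpm : |p (Fin.last m) - q (Fin.last k)| ≤ δ := by
    have := hreal 1
    rwa [hf1, hg1, polyCurve_one hm, polyCurve_one hk] at this
  constructor
  · apply seg_frechet_le _ _ δ hδ.le hAB _ (polyCurve_continuous hk q)
    · rw [polyCurve_zero hk]; simp [hδ.le]
    · rw [polyCurve_one hk]; simp [hδ.le]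
    · intro t; linarith [(hQrange t).1]
    · intro t; linarith [(hQrange t).2]
    · exact backtrack_transfer hk q (2*δ) (by linarith) cA
  · apply seg_frechet_le _ _ δ hδ.le hAB _ (polyCurve_continuous hm p)
    · rw [polyCurve_zero hm, abs_sub_comm]
      rwa [abs_sub_comm] at hp0
    · rw [polyCurve_one hm, abs_sub_comm]
      rwa [abs_sub_comm] at hpm
    · intro s
      obtain ⟨t, ht⟩ := hfs s
      have h1 := hreal t
      rw [ht, abs_le] at h1
      linarith [(hQrange (g t)).1, h1.1, h1.2]
    · intro s
      obtain ⟨t, ht⟩ := hfs s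
      have h1 := hreal t
      rw [ht, abs_le] at h1
      linarith [(hQrange (g t)).2, h1.1, h1.2]
    · exact backtrack_transfer hm p (2*δ) (by linarith) cB

/-- If a monotone traversal realizes distance `δ` between the
polygonal curves `P` (on `p`) and `Q` (on `q`), `Q` stays in the interval spanned
by its endpoints, and no inner vertex of `Q` `δ`-visits an inner vertex of `P`,
then the segment `Q'` from `Q(0)` to `Q(1)` is a range-preserving
`δ`-simplification of `Q` with `d_F(Q', P) ≤ δ`. -/
theorem segment_simplification_of_no_inner_visits (δ : ℝ) (hδ : 0 < δ)
    (m k : ℕ) (hm : 0 < m) (hk : 0 < k)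
    (p : Fin (m + 1) → ℝ) (q : Fin (k + 1) → ℝ)
    (f g : unitInterval → unitInterval)
    (hfc : Continuous f) (hgc : Continuous g)
    (hfm : Monotone f) (hgm : Monotone g)
    (hfs : Function.Surjective f) (hgs : Function.Surjective g)
    (hreal : ∀ t : unitInterval, |polyCurve m p (f t) - polyCurve k q (g t)| ≤ δ)
    (hQr : ∀ s : unitInterval, polyCurve k q s ∈ Set.uIcc (q 0) (q (Fin.last k)))
    (hnv : ∀ (j : Fin (k + 1)) (a : Fin (m + 1)),
      0 < (j : ℕ) → (j : ℕ) < k → 0 < (a : ℕ) → (a : ℕ) < m →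
        ¬ Visits δ m k p q f g j a) :
    frechetDist (segCurve (q 0) (q (Fin.last k))) (polyCurve k q) ≤ δ ∧
    (∀ s : unitInterval, polyCurve k q s ∈ Set.uIcc (q 0) (q (Fin.last k))) ∧
    frechetDist (segCurve (q 0) (q (Fin.last k))) (polyCurve m p) ≤ δ := by
  rcases le_total (q 0) (q (Fin.last k)) with hAB | hBA
  · obtain ⟨h1, h2⟩ := main_half δ hδ m k hm hk p q f g hfm hgm hfs hgs hreal hQr hnv hAB
    exact ⟨h1, hQr, h2⟩
  · -- reflected case
    set p' : Fin (m+1) → ℝ := fun i => -(p i) with hp'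
    set q' : Fin (k+1) → ℝ := fun i => -(q i) with hq'
    have hreal' : ∀ t : unitInterval, |polyCurve m p' (f t) - polyCurve k q' (g t)| ≤ δ := by
      intro t
      rw [hp', hq', polyCurve_neg, polyCurve_neg]
      have e : -(polyCurve m p (f t)) - -(polyCurve k q (g t))
          = -(polyCurve m p (f t) - polyCurve k q (g t)) := by ring
      rw [e, abs_neg]
      exact hreal t
    have hQr' : ∀ s : unitInterval, polyCurve k q' s ∈ Set.uIcc (q' 0) (q' (Fin.last k)) := by
      intro s
      rw [hq', polyCurve_neg]
      have := hQr s
      rw [Set.uIcc_of_ge hBA, Set.mem_Icc] at this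
      simp only []
      rw [Set.uIcc_of_le (by simp [hBA] : -(q 0) ≤ -(q (Fin.last k))), Set.mem_Icc]
      constructor <;> simp <;> linarith [this.1, this.2]
    have hnv' : ∀ (j : Fin (k + 1)) (a : Fin (m + 1)),
        0 < (j : ℕ) → (j : ℕ) < k → 0 < (a : ℕ) → (a : ℕ) < m →
          ¬ Visits δ m k p' q' f g j a := by
      intro j a c1 c2 c3 c4 hv
      apply hnv j a c1 c2 c3 c4
      refine ⟨?_, hv.2⟩
      have h1 := hv.1
      rw [hp', hq'] at h1
      have e : -(q j) - -(p a) = -(q j - p a) := by ring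
      simp only [] at h1
      rw [e, abs_neg] at h1
      exact h1
    have hAB' : q' 0 ≤ q' (Fin.last k) := by
      rw [hq']; simp [hBA]
    obtain ⟨h1, h2⟩ := main_half δ hδ m k hm hk p' q' f g hfm hgm hfs hgs hreal' hQr' hnv' hAB'
    rw [hq'] at h1
    rw [hp', hq'] at h2
    simp only [polyCurve_neg] at h1 h2
    rw [segCurve_neg, frechetDist_neg] at h1 h2
    exact ⟨h1, hQr, h2⟩
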